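/- Let f : ℝ^n → ℝ ∪ {∞} be proper, lower semicontinuous and convex, x̄ a minimizer of f, and suppose the quadratic growth condition holds: there exist κ, γ > 0 with f(x) ≥ f(x̄) + (κ/2)‖x − x̄‖² for all x ∈ B_γ(x̄). Then for every w ∈ ℝ^n and every z ∈ D(∂f)(x̄|0)(w) one has ⟨z, w⟩ ≥ (κ/2)‖w‖². -/

import Mathlib

open Filter

/-- The Bouligand (contingent) tangent cone to a set `s` at a point `p`. -/
def contingentCone {F : Type*} [NormedAddCommGroup F] [NormedSpace ℝ F]
    (s : Set F) (p : F) : Set F :=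
  {v | ∃ t : ℕ → ℝ, ∃ w : ℕ → F, (∀ k, 0 < t k) ∧ Tendsto t atTop (nhds 0) ∧
    Tendsto w atTop (nhds v) ∧ ∀ k, p + t k • w k ∈ s}

/-- The convex subdifferential of an extended-real-valued function. -/
def convexSubdiff {n : ℕ} (f : EuclideanSpace ℝ (Fin n) → EReal)
    (x : EuclideanSpace ℝ (Fin n)) : Set (EuclideanSpace ℝ (Fin n)) :=
  {v | ∀ u, f x + (((inner ℝ v (u - x) : ℝ)) : EReal) ≤ f u}

/-- For a proper l.s.c. convex function satisfying the quadratic growth condition at a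
minimizer `xb`, every `z ∈ D(∂f)(xb|0)(w)` satisfies `⟪z, w⟫ ≥ (κ/2)‖w‖²`. -/
theorem stmt10 {n : ℕ} (f : EuclideanSpace ℝ (Fin n) → EReal)
    (hproper_bot : ∀ x, f x ≠ ⊥)
    (xb : EuclideanSpace ℝ (Fin n)) (hdom : f xb ≠ ⊤)
    (hlsc : LowerSemicontinuous f)
    (hconv : Convex ℝ {p : EuclideanSpace ℝ (Fin n) × ℝ | f p.1 ≤ (p.2 : EReal)})
    (hmin : ∀ x, f xb ≤ f x)
    (κ : ℝ) (hκ : 0 < κ) (γ : ℝ) (hγ : 0 < γ)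
    (hQG : ∀ x, ‖x - xb‖ ≤ γ → f xb + ((κ / 2 * ‖x - xb‖ ^ 2 : ℝ) : EReal) ≤ f x) :
    ∀ w z : EuclideanSpace ℝ (Fin n),
      (w, z) ∈ contingentCone
        {p : EuclideanSpace ℝ (Fin n) × EuclideanSpace ℝ (Fin n) |
          p.2 ∈ convexSubdiff f p.1} (xb, 0) →
      κ / 2 * ‖w‖ ^ 2 ≤ (inner ℝ z w : ℝ) := by
  intro w z hc
  obtain ⟨t, p, ht, htlim, hplim, hmem⟩ := hc
  set wk : ℕ → EuclideanSpace ℝ (Fin n) := fun k => (p k).1 with hwk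
  set zk : ℕ → EuclideanSpace ℝ (Fin n) := fun k => (p k).2 with hzk
  have hwlim : Tendsto wk atTop (nhds w) := (continuous_fst.tendsto _).comp hplim
  have hzlim : Tendsto zk atTop (nhds z) := (continuous_snd.tendsto _).comp hplim
  have hnormlim : Tendsto (fun k => t k * ‖wk k‖) atTop (nhds 0) := by
    have := htlim.mul hwlim.norm
    simpa using this
  have hev : ∀ᶠ k in atTop, t k * ‖wk k‖ ≤ γ :=
    hnormlim.eventually_le_const hγ
  have key : ∀ k, t k * ‖wk k‖ ≤ γ → κ / 2 * ‖wk k‖ ^ 2 ≤ (inner ℝ (zk k) (wk k) : ℝ) := by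
    intro k hk
    have hx := hmem k
    simp only [Set.mem_setOf_eq, Prod.fst_add, Prod.snd_add, Prod.smul_fst, Prod.smul_snd,
      zero_add] at hx
    set x : EuclideanSpace ℝ (Fin n) := xb + t k • wk k with hxdef
    have hnorm : ‖x - xb‖ = t k * ‖wk k‖ := by
      have hxsub : x - xb = t k • wk k := by simp [hxdef]
      rw [hxsub, norm_smul, Real.norm_eq_abs, abs_of_pos (ht k)]
    have hsub := hx xb
    have hinner : (inner ℝ (t k • zk k) (xb - x) : ℝ)
        = -(t k * (t k * inner ℝ (zk k) (wk k))) := by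
      have hneg : xb - x = -(t k • wk k) := by simp [hxdef]
      rw [hneg, inner_neg_right, real_inner_smul_left, real_inner_smul_right]
    rw [hinner] at hsub
    have hqg := hQG x (by rw [hnorm]; exact hk)
    rw [hnorm] at hqg
    have hxtop : f x ≠ ⊤ := by
      intro h
      rw [h, EReal.top_add_coe] at hsub
      exact hdom (top_le_iff.mp hsub)
    have hfa : (((f xb).toReal : ℝ) : EReal) = f xb := EReal.coe_toReal hdom (hproper_bot xb)
    have hfb : (((f x).toReal : ℝ) : EReal) = f x := EReal.coe_toReal hxtop (hproper_bot x)
    rw [← hfa, ← hfb, ← EReal.coe_add, EReal.coe_le_coe_iff] at hsub hqg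
    have hcomb : κ / 2 * (t k * ‖wk k‖) ^ 2 ≤ t k * (t k * inner ℝ (zk k) (wk k)) := by
      nlinarith [hsub, hqg]
    have ht2 : (0:ℝ) < t k ^ 2 := pow_pos (ht k) 2
    nlinarith [hcomb, ht2]
  have hevkey : ∀ᶠ k in atTop,
      κ / 2 * ‖wk k‖ ^ 2 ≤ (inner ℝ (zk k) (wk k) : ℝ) := hev.mono key
  have h1 : Tendsto (fun k => κ / 2 * ‖wk k‖ ^ 2) atTop (nhds (κ / 2 * ‖w‖ ^ 2)) :=
    (hwlim.norm.pow 2).const_mul _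
  have h2 : Tendsto (fun k => (inner ℝ (zk k) (wk k) : ℝ)) atTop (nhds (inner ℝ z w)) :=
    hzlim.inner hwlim
  exact le_of_tendsto_of_tendsto h1 h2 hevkey
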